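/- Let n ∈ ℕ, T > 0, and w ∈ (0, ∞)^n. Let c : [0, T] → ℝ^n with c_i(t) ≥ 0 for all i and t, and suppose there exist integrable functions v_i ∈ L¹(0, T) with c_i(t) = c_i(0) + ∫₀ᵗ v_i(r) dr for all t ∈ [0, T] and all i. Define b(a, s) = s·log a for a > 0 and b(0, s) = 0, and B(c, v) = Σ_{i=1}^n b(c_i/w_i, v_i). If t ↦ B(c(t), v(t)) is integrable on (0, T), then for the relative entropy E(c) = Σ_{i=1}^n w_i·λ_B(c_i/w_i), with λ_B(r) = r·log r − r + 1 (λ_B(0) = 1), one has E(c(t)) − E(c(s)) = ∫ₛᵗ B(c(r), v(r)) dr for all 0 ≤ s ≤ t ≤ T; in particular t ↦ E(c(t)) is absolutely continuous with derivative B(c(t), v(t)) almost everywhere. -/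

import Mathlib

open MeasureTheory

/-- The Boltzmann function `λ_B(r) = r log r - r + 1` (note `λ_B(0) = 1`). -/
noncomputable def lamB (r : ℝ) : ℝ := r * Real.log r - r + 1

/-- `b(a, s) = s log a` for `a > 0` and `b(0, s) = 0`. -/
noncomputable def bfun (a s : ℝ) : ℝ := if 0 < a then s * Real.log a else 0

open Set intervalIntegral


lemma eq_zero_of_abs_le_all (x : ℝ) (h : ∀ ε > 0, |x| ≤ ε) : x = 0 := by
  by_contra hx
  have h1 : 0 < |x| := abs_pos.mpr hx
  have := h (|x| / 2) (by positivity)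
  linarith

lemma core_chain {u g : ℝ → ℝ} {p q : ℝ} (hpq : p ≤ q)
    (hg : IntegrableOn g (Set.Ioo p q))
    (hu : ∀ x ∈ Set.Icc p q, u x = u p + ∫ r in p..x, g r)
    {m M ρ : ℝ} (hρ : 0 < ρ)
    (hrange : ∀ x ∈ Set.Icc p q, u x ∈ Set.Icc m M)
    {ψ dψ : ℝ → ℝ}
    (hψ : ∀ x ∈ Set.Icc (m - ρ) (M + ρ), HasDerivAt ψ (dψ x) x)
    (hdψ : ContinuousOn dψ (Set.Icc (m - ρ) (M + ρ))) :
    ψ (u q) - ψ (u p) = ∫ r in p..q, dψ (u r) * g r := by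
  rcases eq_or_lt_of_le hpq with rfl | hlt
  · simp
  have hgIcc : IntegrableOn g (Set.Icc p q) := by
    rwa [integrableOn_Icc_iff_integrableOn_Ioo]
  have hgIoc : IntegrableOn g (Set.Ioc p q) := hgIcc.mono_set Ioc_subset_Icc_self
  set K := Set.Icc (m - ρ) (M + ρ) with hKdef
  have hpmem : p ∈ Set.Icc p q := ⟨le_refl _, hpq⟩
  have hmM : m ≤ M := le_trans (hrange p hpmem).1 (hrange p hpmem).2
  have hKcpt : IsCompact K := isCompact_Icc
  have hKcvx : Convex ℝ K := convex_Icc _ _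
  obtain ⟨C, hC⟩ : ∃ C, ∀ x ∈ K, |dψ x| ≤ C := by
    obtain ⟨C, hC⟩ := hKcpt.exists_bound_of_continuousOn hdψ
    exact ⟨C, fun x hx => by simpa using hC x hx⟩
  have hmemK : ∀ x ∈ Set.Icc p q, u x ∈ K := by
    intro x hx
    obtain ⟨h1, h2⟩ := hrange x hx
    exact ⟨by linarith, by linarith⟩
  have hC0 : 0 ≤ C := le_trans (abs_nonneg _) (hC (u p) (hmemK p hpmem))
  have hlip : ∀ x ∈ K, ∀ y ∈ K, |ψ y - ψ x| ≤ C * |y - x| := by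
    intro x hx y hy
    have := hKcvx.norm_image_sub_le_of_norm_hasDerivWithin_le
      (f := ψ) (f' := dψ) (fun z hz => (hψ z hz).hasDerivWithinAt)
      (fun z hz => by simpa using hC z hz) hx hy
    simpa [Real.norm_eq_abs] using this
  have huc : UniformContinuousOn dψ K := hKcpt.uniformContinuousOn_of_continuous hdψ
  set Gn := ∫ r in Set.Ioc p q, |g r| with hGndef
  have hGn0 : 0 ≤ Gn := integral_nonneg (fun _ => abs_nonneg _)
  -- continuity of u on Icc p q
  have hucont : ContinuousOn u (Set.Icc p q) := by
    have h2 : ContinuousOn (fun x => u p + ∫ r in p..x, g r) (Set.Icc p q) := by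
      apply continuousOn_const.add
      have := intervalIntegral.continuousOn_primitive_interval
        (a := p) (b := q) (μ := volume) (f := g) (by rwa [uIcc_of_le hpq])
      rwa [uIcc_of_le hpq] at this
    exact h2.congr hu
  -- key epsilon estimate
  have key : ∀ ε > 0, |ψ (u q) - ψ (u p) - ∫ r in p..q, dψ (u r) * g r| ≤ ε := by
    intro ε hε
    -- uniform continuity modulus
    set ε' := ε / (2 * (Gn + 1)) with hε'def
    have hε' : 0 < ε' := by positivity
    obtain ⟨δ, hδ, hδuc⟩ := (Metric.uniformContinuousOn_iff).mp huc ε' hε'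
    set η := min ρ (min (δ / 2) (ε / (2 * (2 * C + 1)))) with hηdef
    have hη : 0 < η := by
      apply lt_min hρ
      apply lt_min (by linarith)
      positivity
    -- approximate g by a bounded continuous function
    haveI : (volume.restrict (Set.Ioc p q)).WeaklyRegular := by
      apply MeasureTheory.Measure.WeaklyRegular.restrict_of_measure_ne_top
      simp [Real.volume_Ioc]
    obtain ⟨gc, hgcnear, hgcint⟩ :=
      (hgIoc : Integrable g (volume.restrict (Set.Ioc p q))).exists_boundedContinuous_integral_sub_le hη
    set ut : ℝ → ℝ := fun x => u p + ∫ r in p..x, (gc : ℝ → ℝ) r with hutdef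
    have hgc_cont : Continuous (gc : ℝ → ℝ) := gc.continuous
    have hut_deriv : ∀ x, HasDerivAt ut ((gc : ℝ → ℝ) x) x := by
      intro x
      exact ((hgc_cont.integral_hasStrictDerivAt p x).hasDerivAt).const_add (u p)
    have hutp : ut p = u p := by simp [hutdef]
    -- distance between ut and u on Icc p q
    have hdist : ∀ x ∈ Set.Icc p q, |ut x - u x| ≤ η := by
      intro x hx
      have hgi : IntervalIntegrable g volume p x := by
        apply IntegrableOn.intervalIntegrable
        rw [uIcc_of_le hx.1]
        exact hgIcc.mono_set (Icc_subset_Icc le_rfl hx.2)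
      have hgci : IntervalIntegrable (gc : ℝ → ℝ) volume p x := hgc_cont.intervalIntegrable _ _
      have : ut x - u x = ∫ r in p..x, ((gc : ℝ → ℝ) r - g r) := by
        rw [hu x hx, hutdef]
        simp only [add_sub_add_left_eq_sub]
        rw [intervalIntegral.integral_sub hgci hgi]
      rw [this]
      calc |∫ r in p..x, ((gc : ℝ → ℝ) r - g r)|
          ≤ ∫ r in p..x, |(gc : ℝ → ℝ) r - g r| := by
            simpa [Real.norm_eq_abs] using intervalIntegral.norm_integral_le_integral_norm (f := fun r => (gc : ℝ → ℝ) r - g r) hx.1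
        _ = ∫ r in Set.Ioc p x, |(gc : ℝ → ℝ) r - g r| := by
            rw [intervalIntegral.integral_of_le hx.1]
        _ ≤ ∫ r in Set.Ioc p q, |(gc : ℝ → ℝ) r - g r| := by
            apply setIntegral_mono_set
            · exact ((hgcint.sub hgIoc).abs)
            · exact Filter.Eventually.of_forall (fun r => abs_nonneg _)
            · exact HasSubset.Subset.eventuallyLE (Ioc_subset_Ioc_right hx.2)
        _ = ∫ r in Set.Ioc p q, |g r - (gc : ℝ → ℝ) r| := by
            congr 1; ext r; rw [abs_sub_comm]
        _ ≤ η := by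
            simpa [Real.norm_eq_abs] using hgcnear
    have hmemK' : ∀ x ∈ Set.Icc p q, ut x ∈ K := by
      intro x hx
      obtain ⟨h1, h2⟩ := hrange x hx
      have h3 := abs_le.mp (hdist x hx)
      have hηρ : η ≤ ρ := min_le_left _ _
      constructor
      · linarith [h3.1]
      · linarith [h3.2]
    have hut_cont : Continuous ut := by
      apply continuous_const.add
      exact intervalIntegral.continuous_primitive (fun a b => hgc_cont.intervalIntegrable a b) p
    -- FTC for the approximation
    have hftc : ψ (ut q) - ψ (ut p) = ∫ r in p..q, dψ (ut r) * (gc : ℝ → ℝ) r := by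
      have hderiv : ∀ x ∈ Set.uIcc p q, HasDerivAt (fun y => ψ (ut y)) (dψ (ut x) * (gc : ℝ → ℝ) x) x := by
        intro x hx
        rw [uIcc_of_le hpq] at hx
        exact (hψ (ut x) (hmemK' x hx)).comp x (hut_deriv x)
      refine (intervalIntegral.integral_eq_sub_of_hasDerivAt hderiv ?_).symm
      apply ContinuousOn.intervalIntegrable
      apply ContinuousOn.mul
      · apply hdψ.comp (hut_cont.continuousOn)
        intro x hx
        rw [uIcc_of_le hpq] at hx
        exact hmemK' x hx
      · exact hgc_cont.continuousOn
    -- now compare integrals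
    have hInt1 : IntegrableOn (fun r => dψ (ut r) * ((gc : ℝ → ℝ) r - g r)) (Set.Ioc p q) := by
      apply Integrable.bdd_mul (c := C) (hgcint.sub hgIoc)
      · apply ContinuousOn.aestronglyMeasurable _ measurableSet_Ioc
        apply hdψ.comp
        · apply Continuous.continuousOn
          apply continuous_const.add
          exact intervalIntegral.continuous_primitive (fun a b => hgc_cont.intervalIntegrable a b) p
        · intro x hx
          exact hmemK' x (Ioc_subset_Icc_self hx)
      · apply (ae_restrict_iff' measurableSet_Ioc).mpr
        apply Filter.Eventually.of_forall
        intro x hx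
        simpa [Real.norm_eq_abs] using hC (ut x) (hmemK' x (Ioc_subset_Icc_self hx))
    have hInt2 : IntegrableOn (fun r => (dψ (ut r) - dψ (u r)) * g r) (Set.Ioc p q) := by
      apply Integrable.bdd_mul (c := 2 * C) hgIoc
      · apply AEStronglyMeasurable.sub
        · apply ContinuousOn.aestronglyMeasurable _ measurableSet_Ioc
          apply hdψ.comp
          · apply Continuous.continuousOn
            apply continuous_const.add
            exact intervalIntegral.continuous_primitive (fun a b => hgc_cont.intervalIntegrable a b) p
          · intro x hx
            exact hmemK' x (Ioc_subset_Icc_self hx)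
        · apply ContinuousOn.aestronglyMeasurable _ measurableSet_Ioc
          apply hdψ.comp (hucont.mono Ioc_subset_Icc_self)
          intro x hx
          exact hmemK x (Ioc_subset_Icc_self hx)
      · apply (ae_restrict_iff' measurableSet_Ioc).mpr
        apply Filter.Eventually.of_forall
        intro x hx
        have h1 := hC (ut x) (hmemK' x (Ioc_subset_Icc_self hx))
        have h2 := hC (u x) (hmemK x (Ioc_subset_Icc_self hx))
        simp only [Real.norm_eq_abs]
        calc |dψ (ut x) - dψ (u x)| ≤ |dψ (ut x)| + |dψ (u x)| := abs_sub _ _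
          _ ≤ 2 * C := by linarith
    -- remaining integrability
    have hIntug : IntegrableOn (fun r => dψ (u r) * g r) (Set.Ioc p q) := by
      apply Integrable.bdd_mul (c := C) hgIoc
      · apply ContinuousOn.aestronglyMeasurable _ measurableSet_Ioc
        apply hdψ.comp (hucont.mono Ioc_subset_Icc_self)
        intro x hx
        exact hmemK x (Ioc_subset_Icc_self hx)
      · apply (ae_restrict_iff' measurableSet_Ioc).mpr
        apply Filter.Eventually.of_forall
        intro x hx
        simpa [Real.norm_eq_abs] using hC (u x) (hmemK x (Ioc_subset_Icc_self hx))
    have hIntutgc : IntegrableOn (fun r => dψ (ut r) * (gc : ℝ → ℝ) r) (Set.Ioc p q) := by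
      apply Integrable.bdd_mul (c := C) hgcint
      · apply ContinuousOn.aestronglyMeasurable _ measurableSet_Ioc
        apply hdψ.comp (hut_cont.continuousOn)
        intro x hx
        exact hmemK' x (Ioc_subset_Icc_self hx)
      · apply (ae_restrict_iff' measurableSet_Ioc).mpr
        apply Filter.Eventually.of_forall
        intro x hx
        simpa [Real.norm_eq_abs] using hC (ut x) (hmemK' x (Ioc_subset_Icc_self hx))
    set I1 := ∫ r in Set.Ioc p q, dψ (ut r) * ((gc : ℝ → ℝ) r - g r) with hI1def
    set I2 := ∫ r in Set.Ioc p q, (dψ (ut r) - dψ (u r)) * g r with hI2def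
    have hsplit : (∫ r in p..q, dψ (ut r) * (gc : ℝ → ℝ) r) - ∫ r in p..q, dψ (u r) * g r
        = I1 + I2 := by
      rw [intervalIntegral.integral_of_le hpq, intervalIntegral.integral_of_le hpq]
      rw [← integral_sub hIntutgc hIntug, ← integral_add hInt1 hInt2]
      apply MeasureTheory.integral_congr_ae
      apply Filter.Eventually.of_forall
      intro r
      ring
    have hbound1 : |ψ (u q) - ψ (ut q)| ≤ C * η := by
      have hq : q ∈ Set.Icc p q := ⟨hpq, le_refl _⟩
      have := hlip (ut q) (hmemK' q hq) (u q) (hmemK q hq)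
      have h2 : |u q - ut q| ≤ η := by
        rw [abs_sub_comm]; exact hdist q hq
      nlinarith [abs_nonneg (u q - ut q)]
    have hbound2 : |I1| ≤ C * η := by
      have h1 : |I1| ≤ ∫ r in Set.Ioc p q, |dψ (ut r)| * |(gc : ℝ → ℝ) r - g r| := by
        simpa [Real.norm_eq_abs] using
          MeasureTheory.norm_integral_le_integral_norm (μ := volume.restrict (Set.Ioc p q))
            (f := fun r => dψ (ut r) * ((gc : ℝ → ℝ) r - g r))
      have h2 : ∫ r in Set.Ioc p q, |dψ (ut r)| * |(gc : ℝ → ℝ) r - g r|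
          ≤ ∫ r in Set.Ioc p q, C * |(gc : ℝ → ℝ) r - g r| := by
        have habs : IntegrableOn (fun r => |dψ (ut r)| * |(gc : ℝ → ℝ) r - g r|) (Set.Ioc p q) := by
          have := hInt1.abs
          exact (by simpa [abs_mul] using this : Integrable (fun r => |dψ (ut r)| * |(gc : ℝ → ℝ) r - g r|) (volume.restrict (Set.Ioc p q)))
        apply integral_mono_ae habs ((hgcint.sub hgIoc).abs.const_mul C)
        apply (ae_restrict_iff' measurableSet_Ioc).mpr
        apply Filter.Eventually.of_forall
        intro x hx
        apply mul_le_mul_of_nonneg_right _ (abs_nonneg _)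
        exact hC (ut x) (hmemK' x (Ioc_subset_Icc_self hx))
      have h3 : ∫ r in Set.Ioc p q, C * |(gc : ℝ → ℝ) r - g r| ≤ C * η := by
        rw [MeasureTheory.integral_const_mul]
        apply mul_le_mul_of_nonneg_left _ hC0
        calc ∫ r in Set.Ioc p q, |(gc : ℝ → ℝ) r - g r|
            = ∫ r in Set.Ioc p q, |g r - (gc : ℝ → ℝ) r| := by
              congr 1; ext r; rw [abs_sub_comm]
          _ ≤ η := by simpa [Real.norm_eq_abs] using hgcnear
      linarith
    have hbound3 : |I2| ≤ ε' * Gn := by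
      have h1 : |I2| ≤ ∫ r in Set.Ioc p q, |dψ (ut r) - dψ (u r)| * |g r| := by
        simpa [Real.norm_eq_abs] using
          MeasureTheory.norm_integral_le_integral_norm (μ := volume.restrict (Set.Ioc p q))
            (f := fun r => (dψ (ut r) - dψ (u r)) * g r)
      have h2 : ∫ r in Set.Ioc p q, |dψ (ut r) - dψ (u r)| * |g r|
          ≤ ∫ r in Set.Ioc p q, ε' * |g r| := by
        have habs : IntegrableOn (fun r => |dψ (ut r) - dψ (u r)| * |g r|) (Set.Ioc p q) := by
          have := hInt2.abs
          exact (by simpa [abs_mul] using this : Integrable (fun r => |dψ (ut r) - dψ (u r)| * |g r|) (volume.restrict (Set.Ioc p q)))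
        apply integral_mono_ae habs (hgIoc.abs.const_mul ε')
        apply (ae_restrict_iff' measurableSet_Ioc).mpr
        apply Filter.Eventually.of_forall
        intro x hx
        apply mul_le_mul_of_nonneg_right _ (abs_nonneg _)
        have hxI : x ∈ Set.Icc p q := Ioc_subset_Icc_self hx
        have hd : dist (ut x) (u x) < δ := by
          have := hdist x hxI
          have hηδ : η ≤ δ / 2 := le_trans (min_le_right _ _) (min_le_left _ _)
          rw [Real.dist_eq]
          linarith [this]
        have := hδuc (ut x) (hmemK' x hxI) (u x) (hmemK x hxI) hd
        rw [Real.dist_eq] at this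
        linarith [this]
      rw [MeasureTheory.integral_const_mul] at h2
      linarith
    have hX : ψ (u q) - ψ (u p) - ∫ r in p..q, dψ (u r) * g r
        = (ψ (u q) - ψ (ut q)) + (I1 + I2) := by
      rw [← hsplit, ← hftc, hutp]
      ring
    rw [hX]
    have hηε : η ≤ ε / (2 * (2 * C + 1)) := le_trans (min_le_right _ _) (min_le_right _ _)
    have hCη : 2 * (C * η) ≤ ε / 2 := by
      have h1 : 2 * C * η ≤ 2 * C * (ε / (2 * (2 * C + 1))) := by
        apply mul_le_mul_of_nonneg_left hηε (by linarith)
      have heq : (2 * C + 1) * (ε / (2 * (2 * C + 1))) = ε / 2 := by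
        field_simp
      have h2 : 2 * C * (ε / (2 * (2 * C + 1))) ≤ (2 * C + 1) * (ε / (2 * (2 * C + 1))) := by
        apply mul_le_mul_of_nonneg_right (by linarith) (by positivity)
      linarith
    have hεG : ε' * Gn ≤ ε / 2 := by
      have heq : ε' * (Gn + 1) = ε / 2 := by
        rw [hε'def]
        field_simp
      nlinarith [hε'.le, hGn0]
    calc |ψ (u q) - ψ (ut q) + (I1 + I2)|
        ≤ |ψ (u q) - ψ (ut q)| + (|I1| + |I2|) := by
          apply le_trans (abs_add_le _ _)
          gcongr
          exact abs_add_le _ _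
      _ ≤ C * η + (C * η + ε' * Gn) := by gcongr
      _ ≤ ε := by linarith
  have := eq_zero_of_abs_le_all _ key
  linarith [this]

lemma continuous_lamB : Continuous lamB := by
  unfold lamB
  exact (Real.continuous_mul_log.sub continuous_id).add continuous_const

lemma lamB_zero : lamB 0 = 1 := by simp [lamB]

lemma hasDerivAt_wlamB {wi x : ℝ} (hwi : 0 < wi) (hx : 0 < x) :
    HasDerivAt (fun y => wi * lamB (y / wi)) (Real.log (x / wi)) x := by
  have hxw : x / wi ≠ 0 := by positivity
  have h1 : HasDerivAt (fun z : ℝ => z * Real.log z) (Real.log (x / wi) + 1) (x / wi) :=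
    Real.hasDerivAt_mul_log hxw
  have h2 : HasDerivAt lamB (Real.log (x / wi)) (x / wi) := by
    have := (h1.sub (hasDerivAt_id (x / wi))).add_const 1
    rw [show Real.log (x / wi) + 1 - 1 = Real.log (x / wi) by ring] at this
    exact this
  have h3 : HasDerivAt (fun y : ℝ => y / wi) (1 / wi) x := by
    simpa using (hasDerivAt_id x).div_const wi
  have h4 := h2.comp x h3
  have h5 := h4.const_mul wi
  have heq : wi * (Real.log (x / wi) * (1 / wi)) = Real.log (x / wi) := by
    field_simp
  rw [heq] at h5
  exact h5

lemma closed_zero_set {F : ℝ → ℝ} {s : Set ℝ} (hF : ContinuousOn F s) (hs : IsClosed s) :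
    IsClosed {x ∈ s | F x = 0} := by
  have h1 := hF.preimage_isClosed_of_isClosed hs (isClosed_singleton (x := (0:ℝ)))
  have h2 : {x ∈ s | F x = 0} = s ∩ F ⁻¹' {0} := by
    ext x; simp [Set.mem_sep_iff]
  rw [h2]
  exact h1

lemma eq_at_right_endpoint {F : ℝ → ℝ} {a b : ℝ} (hab : a < b)
    (hF : ContinuousOn F (Set.Icc a b)) (h0 : ∀ x ∈ Set.Ico a b, F x = 0) : F b = 0 := by
  have hbcl : b ∈ closure (Set.Ico a b) := by
    rw [closure_Ico hab.ne]
    exact ⟨hab.le, le_refl _⟩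
  have hne : (nhdsWithin b (Set.Ico a b)).NeBot := mem_closure_iff_nhdsWithin_neBot.mp hbcl
  have h1 : Filter.Tendsto F (nhdsWithin b (Set.Ico a b)) (nhds (F b)) :=
    (hF b ⟨hab.le, le_refl _⟩).mono_left (nhdsWithin_mono _ Set.Ico_subset_Icc_self)
  have h2 : Filter.Tendsto F (nhdsWithin b (Set.Ico a b)) (nhds 0) := by
    apply Filter.Tendsto.congr' _ tendsto_const_nhds
    filter_upwards [self_mem_nhdsWithin] with x hx
    exact (h0 x hx).symm
  exact tendsto_nhds_unique h1 h2

lemma eq_at_left_endpoint {F : ℝ → ℝ} {a b : ℝ} (hab : a < b)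
    (hF : ContinuousOn F (Set.Icc a b)) (h0 : ∀ x ∈ Set.Ioc a b, F x = 0) : F a = 0 := by
  have hbcl : a ∈ closure (Set.Ioc a b) := by
    rw [closure_Ioc hab.ne]
    exact ⟨le_refl _, hab.le⟩
  have hne : (nhdsWithin a (Set.Ioc a b)).NeBot := mem_closure_iff_nhdsWithin_neBot.mp hbcl
  have h1 : Filter.Tendsto F (nhdsWithin a (Set.Ioc a b)) (nhds (F a)) :=
    (hF a ⟨le_refl _, hab.le⟩).mono_left (nhdsWithin_mono _ Set.Ioc_subset_Icc_self)
  have h2 : Filter.Tendsto F (nhdsWithin a (Set.Ioc a b)) (nhds 0) := by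
    apply Filter.Tendsto.congr' _ tendsto_const_nhds
    filter_upwards [self_mem_nhdsWithin] with x hx
    exact (h0 x hx).symm
  exact tendsto_nhds_unique h1 h2

lemma ii_of_icc {g : ℝ → ℝ} {T a b : ℝ} (hg : IntegrableOn g (Set.Icc 0 T))
    (h0a : 0 ≤ a) (hab : a ≤ b) (hbT : b ≤ T) : IntervalIntegrable g volume a b := by
  apply IntegrableOn.intervalIntegrable
  rw [Set.uIcc_of_le hab]
  exact hg.mono_set (Set.Icc_subset_Icc h0a hbT)

lemma shift_rep {T : ℝ} {u g : ℝ → ℝ}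
    (hg : IntegrableOn g (Set.Icc 0 T))
    (hu : ∀ x ∈ Set.Icc (0:ℝ) T, u x = u 0 + ∫ r in (0:ℝ)..x, g r)
    {a : ℝ} (h0a : 0 ≤ a) (haT : a ≤ T) :
    ∀ x ∈ Set.Icc a T, u x = u a + ∫ r in a..x, g r := by
  intro x hx
  have hxT : x ∈ Set.Icc (0:ℝ) T := ⟨le_trans h0a hx.1, hx.2⟩
  have h1 := hu x hxT
  have h2 := hu a ⟨h0a, haT⟩
  have h3 : (∫ r in (0:ℝ)..x, g r) - (∫ r in (0:ℝ)..a, g r) = ∫ r in a..x, g r :=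
    intervalIntegral.integral_interval_sub_left (ii_of_icc hg le_rfl hxT.1 hxT.2)
      (ii_of_icc hg le_rfl h0a haT)
  rw [h1, h2]
  linarith [h3]

lemma u_contOn {T : ℝ} {u g : ℝ → ℝ} (h0T : 0 ≤ T)
    (hg : IntegrableOn g (Set.Icc 0 T))
    (hu : ∀ x ∈ Set.Icc (0:ℝ) T, u x = u 0 + ∫ r in (0:ℝ)..x, g r) :
    ContinuousOn u (Set.Icc 0 T) := by
  have h2 : ContinuousOn (fun x => u 0 + ∫ r in (0:ℝ)..x, g r) (Set.Icc 0 T) := by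
    apply continuousOn_const.add
    have := intervalIntegral.continuousOn_primitive_interval
      (a := (0:ℝ)) (b := T) (μ := volume) (f := g) (by rwa [Set.uIcc_of_le h0T])
    rwa [Set.uIcc_of_le h0T] at this
  exact h2.congr hu

lemma pos_coord {T wi : ℝ} (hwi : 0 < wi) {u g : ℝ → ℝ}
    (hg : IntegrableOn g (Set.Icc 0 T))
    (hu : ∀ x ∈ Set.Icc (0:ℝ) T, u x = u 0 + ∫ r in (0:ℝ)..x, g r)
    {a b β : ℝ} (h0a : 0 ≤ a) (hab : a ≤ b) (hbT : b ≤ T) (hβ : 0 < β)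
    (hlow : ∀ x ∈ Set.Icc a b, β ≤ u x) :
    wi * lamB (u b / wi) - wi * lamB (u a / wi) = ∫ r in a..b, bfun (u r / wi) (g r) := by
  have h0T : (0:ℝ) ≤ T := le_trans h0a (le_trans hab hbT)
  have hsub : Set.Icc a b ⊆ Set.Icc 0 T := Set.Icc_subset_Icc h0a hbT
  have hucont : ContinuousOn u (Set.Icc a b) := (u_contOn h0T hg hu).mono hsub
  have hne : a ∈ Set.Icc a b := ⟨le_refl _, hab⟩
  obtain ⟨xM, hxM, hmax⟩ := isCompact_Icc.exists_isMaxOn ⟨a, hne⟩ hucont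
  set M := u xM with hMdef
  have hrange : ∀ x ∈ Set.Icc a b, u x ∈ Set.Icc β M := by
    intro x hx
    exact ⟨hlow x hx, hmax hx⟩
  have hβM : β ≤ M := le_trans (hrange a hne).1 (hrange a hne).2
  have hu' : ∀ x ∈ Set.Icc a b, u x = u a + ∫ r in a..x, g r := by
    intro x hx
    exact shift_rep hg hu h0a (le_trans hab hbT) x ⟨hx.1, le_trans hx.2 hbT⟩
  have hcore := core_chain (u := u) (g := g) (p := a) (q := b) hab
    (hg.mono_set (fun x hx => hsub (Set.Ioo_subset_Icc_self hx)))
    hu'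
    (m := β) (M := M) (ρ := β / 2) (by positivity) hrange
    (ψ := fun y => wi * lamB (y / wi)) (dψ := fun y => Real.log (y / wi))
    (by
      intro x hx
      have hxpos : 0 < x := by
        have := hx.1
        linarith
      exact hasDerivAt_wlamB hwi hxpos)
    (by
      intro x hx
      have hxpos : 0 < x := by have := hx.1; linarith
      apply ContinuousAt.continuousWithinAt
      have h1 : ContinuousAt (fun y : ℝ => y / wi) x := continuousAt_id.div_const wi
      have h2 : ContinuousAt Real.log (x / wi) := Real.continuousAt_log (by positivity)
      have h3 := ContinuousAt.comp (x := x) (g := Real.log) (f := fun y : ℝ => y / wi) h2 h1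
      exact h3)
  rw [hcore]
  apply intervalIntegral.integral_congr
  intro r hr
  rw [Set.uIcc_of_le hab] at hr
  have hrpos : 0 < u r / wi := div_pos (lt_of_lt_of_le hβ (hlow r hr)) hwi
  simp only [bfun, if_pos hrpos]
  ring


lemma pos_coord_int {T wi : ℝ} (hwi : 0 < wi) {u g : ℝ → ℝ}
    (hg : IntegrableOn g (Set.Icc 0 T))
    (hu : ∀ x ∈ Set.Icc (0:ℝ) T, u x = u 0 + ∫ r in (0:ℝ)..x, g r)
    {a b β : ℝ} (h0a : 0 ≤ a) (hab : a ≤ b) (hbT : b ≤ T) (hβ : 0 < β)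
    (hlow : ∀ x ∈ Set.Icc a b, β ≤ u x) :
    IntegrableOn (fun r => bfun (u r / wi) (g r)) (Set.Ioc a b) := by
  have h0T : (0:ℝ) ≤ T := le_trans h0a (le_trans hab hbT)
  have hsub : Set.Icc a b ⊆ Set.Icc 0 T := Set.Icc_subset_Icc h0a hbT
  have hucont : ContinuousOn u (Set.Icc a b) := (u_contOn h0T hg hu).mono hsub
  have hlcont : ContinuousOn (fun x => Real.log (u x / wi)) (Set.Icc a b) := by
    intro x hx
    have hpos : 0 < u x / wi := div_pos (lt_of_lt_of_le hβ (hlow x hx)) hwi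
    have h1 : ContinuousWithinAt (fun y => u y / wi) (Set.Icc a b) x :=
      (hucont x hx).div_const wi
    have h2 := ContinuousAt.comp_continuousWithinAt (g := Real.log)
      (f := fun y => u y / wi) (Real.continuousAt_log (ne_of_gt hpos)) h1
    exact h2
  obtain ⟨L, hL⟩ := isCompact_Icc.exists_bound_of_continuousOn hlcont
  have hgIoc : IntegrableOn g (Set.Ioc a b) :=
    hg.mono_set (fun x hx => hsub (Set.Ioc_subset_Icc_self hx))
  have hprod : IntegrableOn (fun r => Real.log (u r / wi) * g r) (Set.Ioc a b) := by
    apply Integrable.bdd_mul (c := L) hgIoc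
    · exact (hlcont.mono Set.Ioc_subset_Icc_self).aestronglyMeasurable measurableSet_Ioc
    · apply (ae_restrict_iff' measurableSet_Ioc).mpr
      apply Filter.Eventually.of_forall
      intro x hx
      exact hL x (Set.Ioc_subset_Icc_self hx)
  apply hprod.congr
  apply (ae_restrict_iff' measurableSet_Ioc).mpr
  apply Filter.Eventually.of_forall
  intro x hx
  have hpos : 0 < u x / wi := div_pos (lt_of_lt_of_le hβ (hlow x (Set.Ioc_subset_Icc_self hx))) hwi
  simp only [bfun, if_pos hpos]
  ring
lemma aux_chain (n : ℕ) (T : ℝ) (hT : 0 < T) (w : Fin n → ℝ) (hw : ∀ i, 0 < w i)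
    (c v : ℝ → Fin n → ℝ)
    (hc_nonneg : ∀ t ∈ Set.Icc (0 : ℝ) T, ∀ i, 0 ≤ c t i)
    (hv_int : ∀ i, IntegrableOn (fun t => v t i) (Set.Ioo 0 T))
    (hc_eq : ∀ t ∈ Set.Icc (0 : ℝ) T, ∀ i, c t i = c 0 i + ∫ r in (0 : ℝ)..t, v r i)
    (A : Finset (Fin n)) :
    ∀ p q : ℝ, 0 ≤ p → p ≤ q → q ≤ T →
      IntegrableOn (fun r => ∑ i ∈ A, bfun (c r i / w i) (v r i)) (Set.Ioo p q) →
      (∑ i ∈ A, w i * lamB (c q i / w i)) - (∑ i ∈ A, w i * lamB (c p i / w i))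
        = ∫ r in p..q, ∑ i ∈ A, bfun (c r i / w i) (v r i) := by
  classical
  induction A using Finset.strongInduction with
  | _ A ih =>
  intro p q hp hpq hqT hBint
  have h0T : (0:ℝ) ≤ T := hT.le
  set E : ℝ → ℝ := fun x => ∑ i ∈ A, w i * lamB (c x i / w i) with hEdef
  set BA : ℝ → ℝ := fun r => ∑ i ∈ A, bfun (c r i / w i) (v r i) with hBAdef
  have hvIcc : ∀ i, IntegrableOn (fun t => v t i) (Set.Icc 0 T) := by
    intro i
    rw [integrableOn_Icc_iff_integrableOn_Ioo]
    exact hv_int i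
  have hccont : ∀ i, ContinuousOn (fun x => c x i) (Set.Icc 0 T) := by
    intro i
    exact u_contOn h0T (hvIcc i) (fun x hx => hc_eq x hx i)
  have hEcont : ContinuousOn E (Set.Icc 0 T) := by
    apply continuousOn_finset_sum
    intro i _
    exact continuousOn_const.mul (continuous_lamB.comp_continuousOn ((hccont i).div_const _))
  have hBIcc : IntegrableOn BA (Set.Icc p q) := by
    rw [integrableOn_Icc_iff_integrableOn_Ioo]
    exact hBint
  have hpqT : Set.Icc p q ⊆ Set.Icc 0 T := Set.Icc_subset_Icc hp hqT
  -- local identity around points where some coordinate is positive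
  have loc : ∀ r ∈ Set.Icc p q, (∃ i ∈ A, c r i ≠ 0) →
      ∃ η > 0, ∀ a b, a ∈ Set.Icc p q → b ∈ Set.Icc p q → r - η ≤ a → a ≤ b → b ≤ r + η →
        E b - E a = ∫ x in a..b, BA x := by
    intro r hr hex
    have hr0T : r ∈ Set.Icc 0 T := hpqT hr
    obtain ⟨i₀, hi₀A, hi₀⟩ := hex
    set S : Finset (Fin n) := A.filter (fun i => c r i = 0) with hSdef
    have hSA : S ⊂ A := Finset.filter_ssubset.mpr ⟨i₀, hi₀A, hi₀⟩
    have hwin : ∀ i, ∃ η, 0 < η ∧ ((i ∈ A ∧ c r i ≠ 0) →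
        ∀ x ∈ Set.Icc (0:ℝ) T, |x - r| ≤ η → c r i / 2 ≤ c x i) := by
      intro i
      by_cases hi : i ∈ A ∧ c r i ≠ 0
      · have hpos : 0 < c r i := lt_of_le_of_ne (hc_nonneg r hr0T i) (Ne.symm hi.2)
        have hcw : ContinuousWithinAt (fun x => c x i) (Set.Icc 0 T) r := hccont i r hr0T
        have hU : {y : ℝ | c r i / 2 < y} ∈ nhds (c r i) := by
          apply IsOpen.mem_nhds (isOpen_lt' _)
          simp only [Set.mem_setOf_eq]
          linarith
        have hpre : (fun x => c x i) ⁻¹' {y : ℝ | c r i / 2 < y} ∈ nhdsWithin r (Set.Icc 0 T) :=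
          hcw hU
        rw [Metric.mem_nhdsWithin_iff] at hpre
        obtain ⟨ε, hε, hball⟩ := hpre
        refine ⟨ε/2, by positivity, ?_⟩
        intro _ x hx hdist
        have hxmem : x ∈ Metric.ball r ε ∩ Set.Icc (0:ℝ) T := by
          constructor
          · rw [Metric.mem_ball, Real.dist_eq]
            linarith
          · exact hx
        have := hball hxmem
        simp only [Set.mem_preimage, Set.mem_setOf_eq] at this
        linarith
      · exact ⟨1, one_pos, fun h => absurd h hi⟩
    choose ηf hηfpos hηf using hwin
    have hi₀AS : i₀ ∈ A \ S := by
      rw [Finset.mem_sdiff]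
      refine ⟨hi₀A, ?_⟩
      rw [hSdef, Finset.mem_filter]
      tauto
    have hASne : (A \ S).Nonempty := ⟨i₀, hi₀AS⟩
    set η := (A \ S).inf' hASne ηf with hηdef
    have hηpos : 0 < η := by
      rw [hηdef, Finset.lt_inf'_iff]
      exact fun i _ => hηfpos i
    refine ⟨η, hηpos, ?_⟩
    intro a b ha hb hra hab hbr
    have h0a : 0 ≤ a := le_trans hp ha.1
    have hbT : b ≤ T := le_trans hb.2 hqT
    have hmemAS : ∀ i ∈ A \ S, i ∈ A ∧ c r i ≠ 0 := by
      intro i hi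
      obtain ⟨hiA, hiS⟩ := Finset.mem_sdiff.mp hi
      refine ⟨hiA, ?_⟩
      intro hzero
      exact hiS (by rw [hSdef, Finset.mem_filter]; exact ⟨hiA, hzero⟩)
    have hlow : ∀ i ∈ A \ S, ∀ x ∈ Set.Icc a b, c r i / 2 ≤ c x i := by
      intro i hi x hx
      have hx0T : x ∈ Set.Icc (0:ℝ) T :=
        ⟨le_trans h0a hx.1, le_trans hx.2 hbT⟩
      apply hηf i (hmemAS i hi) x hx0T
      have hηi : η ≤ ηf i := Finset.inf'_le _ hi
      rw [abs_le]
      constructor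
      · linarith [hx.1]
      · linarith [hx.2]
    have hposr : ∀ i ∈ A \ S, 0 < c r i / 2 := by
      intro i hi
      have := lt_of_le_of_ne (hc_nonneg r hr0T i) (Ne.symm (hmemAS i hi).2)
      linarith
    have hpos_id : ∀ i ∈ A \ S,
        w i * lamB (c b i / w i) - w i * lamB (c a i / w i)
          = ∫ x in a..b, bfun (c x i / w i) (v x i) := by
      intro i hi
      exact pos_coord (hw i) (hvIcc i) (fun x hx => hc_eq x hx i)
        h0a hab hbT (hposr i hi) (hlow i hi)
    have hpos_int : ∀ i ∈ A \ S,
        IntegrableOn (fun x => bfun (c x i / w i) (v x i)) (Set.Ioc a b) := by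
      intro i hi
      exact pos_coord_int (hw i) (hvIcc i) (fun x hx => hc_eq x hx i)
        h0a hab hbT (hposr i hi) (hlow i hi)
    have hScint : IntegrableOn (fun x => ∑ i ∈ A \ S, bfun (c x i / w i) (v x i)) (Set.Ioc a b) :=
      integrable_finset_sum _ (fun i hi => hpos_int i hi)
    have hBA' : IntegrableOn BA (Set.Ioo a b) := hBint.mono_set (Set.Ioo_subset_Ioo ha.1 hb.2)
    have hSint : IntegrableOn (fun x => ∑ i ∈ S, bfun (c x i / w i) (v x i)) (Set.Ioo a b) := by
      have h1 := hBA'.sub (hScint.mono_set Set.Ioo_subset_Ioc_self)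
      apply h1.congr
      apply Filter.Eventually.of_forall
      intro x
      have hsub' : S ⊆ A := by rw [hSdef]; exact Finset.filter_subset _ _
      have h2 := Finset.sum_sdiff (f := fun i => bfun (c x i / w i) (v x i)) hsub'
      show BA x - (∑ i ∈ A \ S, bfun (c x i / w i) (v x i))
        = ∑ i ∈ S, bfun (c x i / w i) (v x i)
      have h3 : BA x = ∑ i ∈ A, bfun (c x i / w i) (v x i) := by rw [hBAdef]
      linarith [h2, h3]
    have hmainS := ih S hSA a b h0a hab hbT hSint
    -- interval integrability of the pieces
    have hScII : IntervalIntegrable (fun x => ∑ i ∈ A \ S, bfun (c x i / w i) (v x i)) volume a b := by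
      rw [intervalIntegrable_iff_integrableOn_Ioc_of_le hab]
      exact hScint
    have hSII : IntervalIntegrable (fun x => ∑ i ∈ S, bfun (c x i / w i) (v x i)) volume a b := by
      rw [intervalIntegrable_iff_integrableOn_Ioc_of_le hab]
      rw [integrableOn_Ioc_iff_integrableOn_Ioo]
      exact hSint
    -- sum of per-coordinate identities over A \ S
    have hScid : (∑ i ∈ A \ S, w i * lamB (c b i / w i)) - (∑ i ∈ A \ S, w i * lamB (c a i / w i))
        = ∫ x in a..b, ∑ i ∈ A \ S, bfun (c x i / w i) (v x i) := by
      rw [intervalIntegral.integral_finset_sum (fun i hi => by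
        rw [intervalIntegrable_iff_integrableOn_Ioc_of_le hab]
        exact hpos_int i hi)]
      rw [← Finset.sum_sub_distrib]
      exact Finset.sum_congr rfl (fun i hi => hpos_id i hi)
    -- combine
    have hEA : ∀ x, E x = (∑ i ∈ A \ S, w i * lamB (c x i / w i))
        + (∑ i ∈ S, w i * lamB (c x i / w i)) := by
      intro x
      have hsub' : S ⊆ A := by rw [hSdef]; exact Finset.filter_subset _ _
      rw [hEdef]
      exact (Finset.sum_sdiff hsub').symm
    have hBAx : ∀ x, BA x = (∑ i ∈ A \ S, bfun (c x i / w i) (v x i))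
        + (∑ i ∈ S, bfun (c x i / w i) (v x i)) := by
      intro x
      have hsub' : S ⊆ A := by rw [hSdef]; exact Finset.filter_subset _ _
      rw [hBAdef]
      exact (Finset.sum_sdiff hsub').symm
    calc E b - E a
        = ((∑ i ∈ A \ S, w i * lamB (c b i / w i)) - (∑ i ∈ A \ S, w i * lamB (c a i / w i)))
          + ((∑ i ∈ S, w i * lamB (c b i / w i)) - (∑ i ∈ S, w i * lamB (c a i / w i))) := by
          rw [hEA b, hEA a]; ring
      _ = (∫ x in a..b, ∑ i ∈ A \ S, bfun (c x i / w i) (v x i))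
          + ∫ x in a..b, ∑ i ∈ S, bfun (c x i / w i) (v x i) := by
          rw [hScid, hmainS]
      _ = ∫ x in a..b, ((∑ i ∈ A \ S, bfun (c x i / w i) (v x i))
          + ∑ i ∈ S, bfun (c x i / w i) (v x i)) := by
          rw [intervalIntegral.integral_add hScII hSII]
      _ = ∫ x in a..b, BA x := by
          apply intervalIntegral.integral_congr
          intro x _
          exact (hBAx x).symm
  -- chaining
  have chain : ∀ a b, a ∈ Set.Icc p q → b ∈ Set.Icc p q → a ≤ b →
      (∀ r ∈ Set.Icc a b, ∃ i ∈ A, c r i ≠ 0) →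
      E b - E a = ∫ x in a..b, BA x := by
    intro a b ha hb hab hfree
    have habsub : Set.Icc a b ⊆ Set.Icc p q := Set.Icc_subset_Icc ha.1 hb.2
    set F : ℝ → ℝ := fun x => E x - E a - ∫ x' in a..x, BA x' with hFdef
    have hBab : IntegrableOn BA (Set.Icc a b) := hBIcc.mono_set (Set.Icc_subset_Icc ha.1 hb.2)
    have hFcont : ContinuousOn F (Set.Icc a b) := by
      apply ContinuousOn.sub
      · exact (hEcont.mono (habsub.trans hpqT)).sub continuousOn_const
      · have := intervalIntegral.continuousOn_primitive_interval (a := a) (b := b) (μ := volume)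
          (f := BA) (by rwa [Set.uIcc_of_le hab])
        rwa [Set.uIcc_of_le hab] at this
    set X := {x ∈ Set.Icc a b | F x = 0} with hXdef
    have hXclosed : IsClosed X := closed_zero_set hFcont isClosed_Icc
    have haX : a ∈ X := by
      refine ⟨⟨le_refl _, hab⟩, ?_⟩
      show E a - E a - ∫ x' in a..a, BA x' = 0
      simp
    have hXbdd : BddAbove X := ⟨b, fun x hx => hx.1.2⟩
    set x₀ := sSup X with hx₀def
    have hx₀X : x₀ ∈ X := hXclosed.csSup_mem ⟨a, haX⟩ hXbdd
    have hx₀ab : x₀ ∈ Set.Icc a b := hx₀X.1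
    have hFx₀ : E x₀ - E a - ∫ x' in a..x₀, BA x' = 0 := hx₀X.2
    rcases eq_or_lt_of_le hx₀ab.2 with heq | hlt2
    · rw [heq] at hFx₀
      linarith
    · exfalso
      have hx₀pq : x₀ ∈ Set.Icc p q := habsub hx₀ab
      obtain ⟨η, hη, hloc⟩ := loc x₀ hx₀pq (hfree x₀ hx₀ab)
      set b' := min b (x₀ + η) with hb'def
      have hx₀b' : x₀ < b' := lt_min hlt2 (by linarith)
      have hb'b : b' ≤ b := min_le_left _ _
      have hb'ab : b' ∈ Set.Icc a b := ⟨le_trans hx₀ab.1 (le_of_lt hx₀b'), hb'b⟩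
      have hb'pq : b' ∈ Set.Icc p q := habsub hb'ab
      have hid2 := hloc x₀ b' hx₀pq hb'pq (by linarith) (le_of_lt hx₀b') (min_le_right _ _)
      have hIIa : IntervalIntegrable BA volume a x₀ := by
        rw [intervalIntegrable_iff_integrableOn_Ioc_of_le hx₀ab.1]
        exact hBab.mono_set (Set.Ioc_subset_Icc_self.trans (Set.Icc_subset_Icc le_rfl hx₀ab.2))
      have hIIb : IntervalIntegrable BA volume x₀ b' := by
        rw [intervalIntegrable_iff_integrableOn_Ioc_of_le (le_of_lt hx₀b')]
        exact hBab.mono_set (Set.Ioc_subset_Icc_self.trans (Set.Icc_subset_Icc hx₀ab.1 hb'b))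
      have hadd := intervalIntegral.integral_add_adjacent_intervals hIIa hIIb
      have hb'X : b' ∈ X := by
        refine ⟨hb'ab, ?_⟩
        show E b' - E a - ∫ x' in a..b', BA x' = 0
        rw [← hadd]
        linarith
      have := le_csSup hXbdd hb'X
      linarith
  -- main case split
  by_cases hY : ∃ y ∈ Set.Icc p q, ∀ i ∈ A, c y i = 0
  · obtain ⟨y₀, hy₀pq, hy₀⟩ := hY
    set Y := {y ∈ Set.Icc p q | ∀ i ∈ A, c y i = 0} with hYdef
    have hYne : Y.Nonempty := ⟨y₀, hy₀pq, hy₀⟩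
    have hYclosed : IsClosed Y := by
      have hFc : ContinuousOn (fun x => ∑ i ∈ A, (c x i) ^ 2) (Set.Icc p q) := by
        apply continuousOn_finset_sum
        intro i _
        exact (((hccont i).mono hpqT)).pow 2
      have hYeq : Y = {x ∈ Set.Icc p q | (∑ i ∈ A, (c x i) ^ 2) = 0} := by
        ext x
        simp only [hYdef, Set.mem_sep_iff]
        constructor
        · rintro ⟨hx1, hx2⟩
          refine ⟨hx1, Finset.sum_eq_zero (fun i hi => by rw [hx2 i hi]; ring)⟩
        · rintro ⟨hx1, hx2⟩
          refine ⟨hx1, ?_⟩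
          intro i hi
          have := (Finset.sum_eq_zero_iff_of_nonneg (fun j _ => sq_nonneg (c x j))).mp hx2 i hi
          exact pow_eq_zero_iff (n := 2) (by norm_num) |>.mp this
      rw [hYeq]
      exact closed_zero_set hFc isClosed_Icc
    have hbddB : BddBelow Y := ⟨p, fun y hy => hy.1.1⟩
    have hbddA : BddAbove Y := ⟨q, fun y hy => hy.1.2⟩
    set y₁ := sInf Y with hy₁def
    set y₂ := sSup Y with hy₂def
    have hy₁Y : y₁ ∈ Y := hYclosed.csInf_mem hYne hbddB
    have hy₂Y : y₂ ∈ Y := hYclosed.csSup_mem hYne hbddA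
    have hy₁₂ : y₁ ≤ y₂ := csInf_le_csSup hYne hbddB hbddA
    have hEY : ∀ y ∈ Y, E y = ∑ i ∈ A, w i := by
      intro y hy
      show (∑ i ∈ A, w i * lamB (c y i / w i)) = ∑ i ∈ A, w i
      apply Finset.sum_congr rfl
      intro i hi
      rw [hy.2 i hi]
      norm_num [lamB_zero]
    have hIIBA : ∀ a b, p ≤ a → a ≤ b → b ≤ q → IntervalIntegrable BA volume a b := by
      intro a b h1 h2 h3
      rw [intervalIntegrable_iff_integrableOn_Ioc_of_le h2]
      exact hBIcc.mono_set (Set.Ioc_subset_Icc_self.trans (Set.Icc_subset_Icc h1 h3))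
    have piece1 : E y₁ - E p = ∫ x in p..y₁, BA x := by
      rcases eq_or_lt_of_le hy₁Y.1.1 with heq | hlt
      · rw [← heq]
        simp
      · set F : ℝ → ℝ := fun x => E x - E p - ∫ x' in p..x, BA x' with hFdef
        have hFcont : ContinuousOn F (Set.Icc p y₁) := by
          apply ContinuousOn.sub
          · apply ContinuousOn.sub _ continuousOn_const
            exact hEcont.mono ((Set.Icc_subset_Icc le_rfl hy₁Y.1.2).trans hpqT)
          · have := intervalIntegral.continuousOn_primitive_interval (a := p) (b := y₁)
              (μ := volume) (f := BA)
              (by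
                rw [Set.uIcc_of_le hlt.le]
                exact hBIcc.mono_set (Set.Icc_subset_Icc le_rfl hy₁Y.1.2))
            rwa [Set.uIcc_of_le hlt.le] at this
        have h0 : ∀ x ∈ Set.Ico p y₁, F x = 0 := by
          intro x hx
          have hxq : x ≤ q := le_trans hx.2.le hy₁Y.1.2
          have hwit : ∀ r ∈ Set.Icc p x, ∃ i ∈ A, c r i ≠ 0 := by
            intro r hrpx
            by_contra hcon
            push_neg at hcon
            have hrY : r ∈ Y := ⟨⟨hrpx.1, le_trans hrpx.2 hxq⟩, hcon⟩
            have := csInf_le hbddB hrY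
            have : y₁ ≤ x := le_trans this hrpx.2
            linarith [hx.2]
          have hch := chain p x ⟨le_refl _, hpq⟩ ⟨hx.1, hxq⟩ hx.1 hwit
          show E x - E p - ∫ x' in p..x, BA x' = 0
          linarith
        have hend := eq_at_right_endpoint hlt hFcont h0
        have : E y₁ - E p - ∫ x' in p..y₁, BA x' = 0 := hend
        linarith
    have piece3 : E q - E y₂ = ∫ x in y₂..q, BA x := by
      rcases eq_or_lt_of_le hy₂Y.1.2 with heq | hlt
      · rw [heq]
        simp
      · set F : ℝ → ℝ := fun x => E q - E x - ∫ x' in x..q, BA x' with hFdef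
        have hFcont : ContinuousOn F (Set.Icc y₂ q) := by
          apply ContinuousOn.sub
          · apply ContinuousOn.sub continuousOn_const
            exact hEcont.mono ((Set.Icc_subset_Icc hy₂Y.1.1 le_rfl).trans hpqT)
          · have := intervalIntegral.continuousOn_primitive_interval_left (a := y₂) (b := q)
              (μ := volume) (f := BA)
              (by
                rw [Set.uIcc_of_le hlt.le]
                exact hBIcc.mono_set (Set.Icc_subset_Icc hy₂Y.1.1 le_rfl))
            rwa [Set.uIcc_of_le hlt.le] at this
        have h0 : ∀ x ∈ Set.Ioc y₂ q, F x = 0 := by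
          intro x hx
          have hxp : p ≤ x := le_trans hy₂Y.1.1 hx.1.le
          have hwit : ∀ r ∈ Set.Icc x q, ∃ i ∈ A, c r i ≠ 0 := by
            intro r hrxq
            by_contra hcon
            push_neg at hcon
            have hrY : r ∈ Y := ⟨⟨le_trans hxp hrxq.1, hrxq.2⟩, hcon⟩
            have := le_csSup hbddA hrY
            have : x ≤ y₂ := le_trans hrxq.1 this
            linarith [hx.1]
          have hch := chain x q ⟨hxp, hx.2⟩ ⟨hpq, le_refl _⟩ hx.2 hwit
          show E q - E x - ∫ x' in x..q, BA x' = 0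
          linarith
        have hend := eq_at_left_endpoint hlt hFcont h0
        have : E q - E y₂ - ∫ x' in y₂..q, BA x' = 0 := hend
        linarith
    have hIzero : (∫ x in y₁..y₂, BA x) = 0 := by
      rcases eq_or_lt_of_le hy₁₂ with heq | hlt12
      · rw [← heq]
        simp
      set V := Set.Ioo y₁ y₂ \ Y with hVdef
      have hVopen : IsOpen V := isOpen_Ioo.sdiff hYclosed
      have hVsub : V ⊆ Set.Ioo y₁ y₂ := Set.diff_subset
      have hVpq : V ⊆ Set.Ioo p q := fun z hz =>
        ⟨lt_of_le_of_lt hy₁Y.1.1 (hVsub hz).1, lt_of_lt_of_le (hVsub hz).2 hy₂Y.1.2⟩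
      have hBAY : ∀ y ∈ Y, BA y = 0 := by
        intro y hy
        show (∑ i ∈ A, bfun (c y i / w i) (v y i)) = 0
        apply Finset.sum_eq_zero
        intro i hi
        rw [hy.2 i hi]
        simp [bfun]
      -- identity over intervals whose interior avoids Y and whose endpoints lie in Y
      have hcompid : ∀ α β, α ∈ Y → β ∈ Y → α < β → (∀ z ∈ Set.Ioo α β, z ∉ Y) →
          (∫ x in α..β, BA x) = 0 := by
        intro α β hα hβ hαβ hfreeY
        have hαpq : α ∈ Set.Icc p q := hα.1
        have hβpq : β ∈ Set.Icc p q := hβ.1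
        have hwitgen : ∀ a' b', α < a' → b' < β → ∀ r ∈ Set.Icc a' b', ∃ i ∈ A, c r i ≠ 0 := by
          intro a' b' ha' hb' r hr
          by_contra hcon
          push_neg at hcon
          have hrmem : r ∈ Set.Ioo α β := ⟨lt_of_lt_of_le ha' hr.1, lt_of_le_of_lt hr.2 hb'⟩
          have hrpq : r ∈ Set.Icc p q :=
            ⟨le_trans hαpq.1 hrmem.1.le, le_trans hrmem.2.le hβpq.2⟩
          exact hfreeY r hrmem ⟨hrpq, hcon⟩
        -- Step A: identity from interior points to β
        have stepA : ∀ x ∈ Set.Ioo α β, E β - E x = ∫ x' in x..β, BA x' := by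
          intro x hx
          have hxpq : x ∈ Set.Icc p q :=
            ⟨le_trans hαpq.1 hx.1.le, le_trans hx.2.le hβpq.2⟩
          set G : ℝ → ℝ := fun y => E y - E x - ∫ x' in x..y, BA x' with hGdef
          have hGcont : ContinuousOn G (Set.Icc x β) := by
            apply ContinuousOn.sub
            · apply ContinuousOn.sub _ continuousOn_const
              exact hEcont.mono ((Set.Icc_subset_Icc hxpq.1 hβpq.2).trans hpqT)
            · have := intervalIntegral.continuousOn_primitive_interval (a := x) (b := β)
                (μ := volume) (f := BA)
                (by
                  rw [Set.uIcc_of_le hx.2.le]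
                  exact hBIcc.mono_set (Set.Icc_subset_Icc hxpq.1 hβpq.2))
              rwa [Set.uIcc_of_le hx.2.le] at this
          have h0 : ∀ y ∈ Set.Ico x β, G y = 0 := by
            intro y hy
            have hypq : y ∈ Set.Icc p q :=
              ⟨le_trans hxpq.1 hy.1, le_trans hy.2.le hβpq.2⟩
            have hch := chain x y hxpq hypq hy.1 (hwitgen x y hx.1 hy.2)
            show E y - E x - ∫ x' in x..y, BA x' = 0
            linarith
          have hend := eq_at_right_endpoint hx.2 hGcont h0
          have : E β - E x - ∫ x' in x..β, BA x' = 0 := hend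
          linarith
        -- Step B: extend to α
        set H : ℝ → ℝ := fun y => E β - E y - ∫ x' in y..β, BA x' with hHdef
        have hHcont : ContinuousOn H (Set.Icc α β) := by
          apply ContinuousOn.sub
          · apply ContinuousOn.sub continuousOn_const
            exact hEcont.mono ((Set.Icc_subset_Icc hαpq.1 hβpq.2).trans hpqT)
          · have := intervalIntegral.continuousOn_primitive_interval_left (a := α) (b := β)
              (μ := volume) (f := BA)
              (by
                rw [Set.uIcc_of_le hαβ.le]
                exact hBIcc.mono_set (Set.Icc_subset_Icc hαpq.1 hβpq.2))
            rwa [Set.uIcc_of_le hαβ.le] at this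
        have h0 : ∀ y ∈ Set.Ioc α β, H y = 0 := by
          intro y hy
          rcases eq_or_lt_of_le hy.2 with heq2 | hlt2
          · show E β - E y - ∫ x' in y..β, BA x' = 0
            rw [heq2]
            simp
          · have := stepA y ⟨hy.1, hlt2⟩
            show E β - E y - ∫ x' in y..β, BA x' = 0
            linarith
        have hend := eq_at_left_endpoint hαβ hHcont h0
        have hid : E β - E α - ∫ x' in α..β, BA x' = 0 := hend
        have hEq : E β - E α = 0 := by
          rw [hEY _ hβ, hEY _ hα]
          ring
        linarith
      by_cases hVne : V.Nonempty
      · -- component structure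
        have hkey : ∀ x ∈ V, ∃ α β, α < β ∧ connectedComponentIn V x = Set.Ioo α β ∧
            α ∈ Y ∧ β ∈ Y := by
          intro x hx
          set C := connectedComponentIn V x with hCdef
          have hCopen : IsOpen C := hVopen.connectedComponentIn
          have hCsub : C ⊆ V := connectedComponentIn_subset _ _
          have hxC : x ∈ C := mem_connectedComponentIn hx
          have hCpre : IsPreconnected C := isPreconnected_connectedComponentIn
          have hCord : Set.OrdConnected C := hCpre.ordConnected
          have hbb : BddBelow C := ⟨y₁, fun z hz => (hVsub (hCsub hz)).1.le⟩
          have hba : BddAbove C := ⟨y₂, fun z hz => (hVsub (hCsub hz)).2.le⟩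
          have hCne : C.Nonempty := ⟨x, hxC⟩
          set α := sInf C with hαdef
          set β := sSup C with hβdef
          have hαnotC : α ∉ C := by
            intro hαC
            obtain ⟨ε, hε, hball⟩ := Metric.isOpen_iff.mp hCopen α hαC
            have hmem : α - ε / 2 ∈ C := by
              apply hball
              rw [Metric.mem_ball, Real.dist_eq]
              rw [abs_of_nonpos (by linarith)]
              linarith
            have := csInf_le hbb hmem
            linarith
          have hβnotC : β ∉ C := by
            intro hβC
            obtain ⟨ε, hε, hball⟩ := Metric.isOpen_iff.mp hCopen β hβC
            have hmem : β + ε / 2 ∈ C := by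
              apply hball
              rw [Metric.mem_ball, Real.dist_eq]
              rw [abs_of_nonneg (by linarith)]
              linarith
            have := le_csSup hba hmem
            linarith
          have hsub1 : C ⊆ Set.Ioo α β := by
            intro z hz
            constructor
            · exact lt_of_le_of_ne (csInf_le hbb hz) (fun e => hαnotC (e ▸ hz))
            · exact lt_of_le_of_ne (le_csSup hba hz) (fun e => hβnotC (e.symm ▸ hz))
          have hsub2 : Set.Ioo α β ⊆ C := by
            intro z hz
            obtain ⟨c₁, hc₁C, hc₁⟩ := (csInf_lt_iff hbb hCne).mp hz.1
            obtain ⟨c₂, hc₂C, hc₂⟩ := (lt_csSup_iff hba hCne).mp hz.2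
            exact hCord.out hc₁C hc₂C ⟨hc₁.le, hc₂.le⟩
          have hCeq : C = Set.Ioo α β := hsub1.antisymm hsub2
          have hαβx : α < x ∧ x < β := by
            have := hsub1 hxC
            exact ⟨this.1, this.2⟩
          have hαβ : α < β := lt_trans hαβx.1 hαβx.2
          -- endpoints are not in V
          have hαnotV : α ∉ V := by
            intro hαV
            obtain ⟨ε, hε, hball⟩ := Metric.isOpen_iff.mp hVopen α hαV
            obtain ⟨t, htC, ht⟩ := (csInf_lt_iff hbb hCne).mp
              (show α < min β (α + ε) from lt_min hαβ (by linarith))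
            have htα : α < t := (hsub1 htC).1
            set sU := Set.Ioo (α - ε) t ∪ C with hsUdef
            have hsUV : sU ⊆ V := by
              intro z hz
              rcases hz with hz | hz
              · rcases le_or_gt z α with hzα | hzα
                · apply hball
                  rw [Metric.mem_ball, Real.dist_eq, abs_of_nonpos (by linarith)]
                  linarith [hz.1]
                · exact hCsub (hsub2 ⟨hzα, lt_of_lt_of_le hz.2 (lt_min_iff.mp ht).1.le⟩)
              · exact hCsub hz
            have hmid : (α + t) / 2 ∈ Set.Ioo (α - ε) t ∩ C := by
              constructor
              · constructor <;> [linarith; linarith]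
              · apply hsub2
                constructor
                · linarith
                · have : t < β := (lt_min_iff.mp ht).1
                  linarith
            have hsUpre : IsPreconnected sU :=
              IsPreconnected.union ((α + t) / 2) hmid.1 hmid.2 isPreconnected_Ioo hCpre
            have hsUC : sU ⊆ C := by
              rw [hCdef]
              apply hsUpre.subset_connectedComponentIn _ hsUV
              exact Or.inr hxC
            have : α - ε / 2 ∈ C := hsUC (Or.inl ⟨by linarith, by linarith⟩)
            have := csInf_le hbb this
            linarith
          have hβnotV : β ∉ V := by
            intro hβV
            obtain ⟨ε, hε, hball⟩ := Metric.isOpen_iff.mp hVopen β hβV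
            obtain ⟨t, htC, ht⟩ := (lt_csSup_iff hba hCne).mp
              (show max α (β - ε) < β from max_lt hαβ (by linarith))
            have htβ : t < β := (hsub1 htC).2
            set sU := Set.Ioo t (β + ε) ∪ C with hsUdef
            have hsUV : sU ⊆ V := by
              intro z hz
              rcases hz with hz | hz
              · rcases lt_or_ge z β with hzβ | hzβ
                · exact hCsub (hsub2 ⟨lt_of_le_of_lt (max_lt_iff.mp ht).1.le hz.1, hzβ⟩)
                · apply hball
                  rw [Metric.mem_ball, Real.dist_eq, abs_of_nonneg (by linarith)]
                  linarith [hz.2]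
              · exact hCsub hz
            have hmid : (t + β) / 2 ∈ Set.Ioo t (β + ε) ∩ C := by
              constructor
              · constructor <;> [linarith; linarith]
              · apply hsub2
                constructor
                · have : α < t := (max_lt_iff.mp ht).1
                  linarith
                · linarith
            have hsUpre : IsPreconnected sU :=
              IsPreconnected.union ((t + β) / 2) hmid.1 hmid.2 isPreconnected_Ioo hCpre
            have hsUC : sU ⊆ C := by
              rw [hCdef]
              apply hsUpre.subset_connectedComponentIn _ hsUV
              exact Or.inr hxC
            have : β + ε / 2 ∈ C := hsUC (Or.inl ⟨by linarith, by linarith⟩)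
            have := le_csSup hba this
            linarith
          -- endpoints lie in Y
          have hy₁α : y₁ ≤ α := le_csInf hCne (fun z hz => (hVsub (hCsub hz)).1.le)
          have hβy₂ : β ≤ y₂ := csSup_le hCne (fun z hz => (hVsub (hCsub hz)).2.le)
          have hαY : α ∈ Y := by
            rcases eq_or_lt_of_le hy₁α with heq | hlt
            · rw [← heq]; exact hy₁Y
            · have hαIoo : α ∈ Set.Ioo y₁ y₂ := ⟨hlt, lt_of_lt_of_le hαβ hβy₂⟩
              by_contra hcon
              exact hαnotV ⟨hαIoo, hcon⟩
          have hβY : β ∈ Y := by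
            rcases eq_or_lt_of_le hβy₂ with heq | hlt
            · rw [heq]; exact hy₂Y
            · have hβIoo : β ∈ Set.Ioo y₁ y₂ := ⟨lt_of_le_of_lt hy₁α hαβ, hlt⟩
              by_contra hcon
              exact hβnotV ⟨hβIoo, hcon⟩
          exact ⟨α, β, hαβ, hCeq, hαY, hβY⟩
        have hcompzero : ∀ x ∈ V, ∫ x' in connectedComponentIn V x, BA x' = 0 := by
          intro x hx
          obtain ⟨α, β, hαβ, hCC, hαY, hβY⟩ := hkey x hx
          have hfreeY : ∀ z ∈ Set.Ioo α β, z ∉ Y := by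
            intro z hz
            have : z ∈ V := (connectedComponentIn_subset V x) (by rw [hCC]; exact hz)
            exact fun hzY => (this.2 hzY)
          have := hcompid α β hαY hβY hαβ hfreeY
          rw [hCC]
          rw [intervalIntegral.integral_of_le hαβ.le] at this
          rw [← integral_Ioc_eq_integral_Ioo]
          exact this
        -- countable union of components
        have hBV : IntegrableOn BA V := hBint.mono_set hVpq
        set Q : Set ℚ := {ζ : ℚ | (ζ : ℝ) ∈ V} with hQdef
        have hQne : Q.Nonempty := by
          obtain ⟨x, hx⟩ := hVne
          obtain ⟨α, β, hαβ, hCC, _, _⟩ := hkey x hx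
          obtain ⟨ζ, hζ1, hζ2⟩ := exists_rat_btwn hαβ
          refine ⟨ζ, ?_⟩
          show (ζ : ℝ) ∈ V
          exact (connectedComponentIn_subset V x) (by rw [hCC]; exact ⟨hζ1, hζ2⟩)
        obtain ⟨f, hf⟩ := (Set.to_countable Q).exists_eq_range hQne
        set D : ℕ → Set ℝ := fun k => connectedComponentIn V ((f k : ℚ) : ℝ) with hDdef
        have hfV : ∀ k, ((f k : ℚ) : ℝ) ∈ V := by
          intro k
          have hfk : f k ∈ Q := by rw [hf]; exact ⟨k, rfl⟩
          exact hfk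
        have hDsub : ∀ k, D k ⊆ V := fun k => connectedComponentIn_subset _ _
        have hDopen : ∀ k, IsOpen (D k) := fun _ => hVopen.connectedComponentIn
        have hVD : V = ⋃ k, D k := by
          apply Set.Subset.antisymm
          · intro x hx
            obtain ⟨α, β, hαβ, hCC, _, _⟩ := hkey x hx
            obtain ⟨ζ, hζ1, hζ2⟩ := exists_rat_btwn hαβ
            have hζC : (ζ : ℝ) ∈ connectedComponentIn V x := by rw [hCC]; exact ⟨hζ1, hζ2⟩
            have hζQ : ζ ∈ Q := (connectedComponentIn_subset V x) hζC
            obtain ⟨k, hk⟩ : ∃ k, f k = ζ := by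
              have := hζQ
              rw [hf] at this
              exact this
            apply Set.mem_iUnion.mpr
            refine ⟨k, ?_⟩
            show x ∈ connectedComponentIn V ((f k : ℚ) : ℝ)
            rw [hk]
            rw [← connectedComponentIn_eq hζC]
            exact mem_connectedComponentIn hx
          · exact Set.iUnion_subset hDsub
        have hDzero : ∀ k, ∫ x' in D k, BA x' = 0 := fun k => hcompzero _ (hfV k)
        have hDeod : ∀ j k, D j = D k ∨ Disjoint (D j) (D k) := by
          intro j k
          by_cases hd : Disjoint (D j) (D k)
          · exact Or.inr hd
          · left
            obtain ⟨z, hzj, hzk⟩ := Set.not_disjoint_iff.mp hd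
            have h1 := connectedComponentIn_eq hzj
            have h2 := connectedComponentIn_eq hzk
            show connectedComponentIn V ((f j : ℚ) : ℝ) = connectedComponentIn V ((f k : ℚ) : ℝ)
            rw [h1, h2]
        have hfin : ∀ N : ℕ, ∫ x' in (⋃ k ∈ Finset.range N, D k), BA x' = 0 := by
          intro N
          induction N with
          | zero => simp
          | succ N ihN =>
            by_cases hdup : ∃ j ∈ Finset.range N, D j = D N
            · obtain ⟨j, hj, hjD⟩ := hdup
              have heq : (⋃ k ∈ Finset.range (N + 1), D k) = ⋃ k ∈ Finset.range N, D k := by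
                apply Set.Subset.antisymm
                · intro z hz
                  simp only [Set.mem_iUnion, Finset.mem_range] at hz ⊢
                  obtain ⟨k, hk, hzk⟩ := hz
                  rcases Nat.lt_succ_iff_lt_or_eq.mp hk with h | h
                  · exact ⟨k, h, hzk⟩
                  · refine ⟨j, Finset.mem_range.mp hj, ?_⟩
                    rw [hjD, ← h]
                    exact hzk
                · intro z hz
                  simp only [Set.mem_iUnion, Finset.mem_range] at hz ⊢
                  obtain ⟨k, hk, hzk⟩ := hz
                  exact ⟨k, Nat.lt_succ_of_lt hk, hzk⟩
              rw [heq]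
              exact ihN
            · push_neg at hdup
              have hdisj : Disjoint (⋃ k ∈ Finset.range N, D k) (D N) := by
                apply Set.disjoint_left.mpr
                intro z hz hzN
                simp only [Set.mem_iUnion, Finset.mem_range] at hz
                obtain ⟨k, hk, hzk⟩ := hz
                rcases hDeod k N with he | hd
                · exact hdup k (Finset.mem_range.mpr hk) he
                · exact (Set.disjoint_left.mp hd hzk) hzN
              have hsplitU : (⋃ k ∈ Finset.range (N + 1), D k)
                  = (⋃ k ∈ Finset.range N, D k) ∪ D N := by
                apply Set.Subset.antisymm
                · intro z hz
                  simp only [Set.mem_iUnion, Finset.mem_range, Set.mem_union] at hz ⊢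
                  obtain ⟨k, hk, hzk⟩ := hz
                  rcases Nat.lt_succ_iff_lt_or_eq.mp hk with h | h
                  · exact Or.inl ⟨k, h, hzk⟩
                  · rw [h] at hzk
                    exact Or.inr hzk
                · intro z hz
                  simp only [Set.mem_iUnion, Finset.mem_range, Set.mem_union] at hz ⊢
                  rcases hz with ⟨k, hk, hzk⟩ | hz
                  · exact ⟨k, Nat.lt_succ_of_lt hk, hzk⟩
                  · exact ⟨N, Nat.lt_succ_self N, hz⟩
              rw [hsplitU, setIntegral_union hdisj (hDopen N).measurableSet
                (hBV.mono_set (Set.iUnion₂_subset (fun k _ => hDsub k)))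
                (hBV.mono_set (hDsub N))]
              rw [ihN, hDzero N]
              ring
        have hmono : Monotone (fun N : ℕ => ⋃ k ∈ Finset.range N, D k) := by
          intro N M hNM
          apply Set.iUnion₂_subset
          intro k hk
          apply Set.subset_iUnion₂ (s := fun k _ => D k) k
          exact Finset.mem_range.mpr (lt_of_lt_of_le (Finset.mem_range.mp hk) hNM)
        have hmeas : ∀ N : ℕ, MeasurableSet (⋃ k ∈ Finset.range N, D k) := by
          intro N
          exact MeasurableSet.biUnion (Finset.range N).countable_toSet
            (fun k _ => (hDopen k).measurableSet)
        have hUeq : (⋃ N : ℕ, ⋃ k ∈ Finset.range N, D k) = V := by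
          rw [hVD]
          apply Set.Subset.antisymm
          · apply Set.iUnion_subset
            intro N
            apply Set.iUnion₂_subset
            intro k _
            exact Set.subset_iUnion D k
          · apply Set.iUnion_subset
            intro k
            intro z hz
            apply Set.mem_iUnion.mpr
            refine ⟨k + 1, ?_⟩
            apply Set.mem_iUnion₂.mpr
            exact ⟨k, Finset.mem_range.mpr (Nat.lt_succ_self k), hz⟩
        have hlim := tendsto_setIntegral_of_monotone (μ := volume) (f := BA) hmeas hmono
          (by rw [hUeq]; exact hBV)
        rw [hUeq] at hlim
        have hVzero : ∫ x' in V, BA x' = 0 := by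
          have hconst : Filter.Tendsto (fun N : ℕ => ∫ x' in (⋃ k ∈ Finset.range N, D k), BA x')
              Filter.atTop (nhds 0) := by
            apply Filter.Tendsto.congr (fun N => (hfin N).symm)
            exact tendsto_const_nhds
          exact tendsto_nhds_unique hlim hconst
        -- assemble the middle integral
        have hYmeas : MeasurableSet (Set.Ioo y₁ y₂ ∩ Y) :=
          measurableSet_Ioo.inter hYclosed.measurableSet
        have hIY : ∫ x' in (Set.Ioo y₁ y₂ ∩ Y), BA x' = 0 := by
          rw [setIntegral_congr_fun hYmeas
            (fun z hz => hBAY z hz.2 : Set.EqOn BA (fun _ => (0:ℝ)) (Set.Ioo y₁ y₂ ∩ Y))]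
          simp
        have hsplitIoo : Set.Ioo y₁ y₂ = V ∪ (Set.Ioo y₁ y₂ ∩ Y) := by
          rw [hVdef]
          exact (Set.diff_union_inter _ _).symm
        have hdisjVY : Disjoint V (Set.Ioo y₁ y₂ ∩ Y) := by
          apply Set.disjoint_left.mpr
          intro z hzV hzY
          exact hzV.2 hzY.2
        rw [intervalIntegral.integral_of_le hy₁₂, integral_Ioc_eq_integral_Ioo, hsplitIoo,
          setIntegral_union hdisjVY hYmeas hBV
            (hBint.mono_set (fun z hz => ⟨lt_of_le_of_lt hy₁Y.1.1 hz.1.1,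
              lt_of_lt_of_le hz.1.2 hy₂Y.1.2⟩))]
        rw [hVzero, hIY]
        ring
      · -- V empty : Ioo y₁ y₂ ⊆ Y
        have hsubY : Set.Ioo y₁ y₂ ⊆ Y := by
          intro z hz
          by_contra hcon
          exact hVne ⟨z, hz, hcon⟩
        rw [intervalIntegral.integral_of_le hy₁₂, integral_Ioc_eq_integral_Ioo]
        rw [setIntegral_congr_fun measurableSet_Ioo
          (fun z hz => hBAY z (hsubY hz) : Set.EqOn BA (fun _ => (0:ℝ)) (Set.Ioo y₁ y₂))]
        simp
    have piece2 : E y₂ - E y₁ = ∫ x in y₁..y₂, BA x := by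
      rw [hIzero, hEY _ hy₂Y, hEY _ hy₁Y]
      ring
    have hadd1 := intervalIntegral.integral_add_adjacent_intervals
      (hIIBA p y₁ le_rfl hy₁Y.1.1 hy₁Y.1.2)
      (hIIBA y₁ y₂ hy₁Y.1.1 hy₁₂ hy₂Y.1.2)
    have hadd2 := intervalIntegral.integral_add_adjacent_intervals
      (hIIBA p y₂ le_rfl (le_trans hy₁Y.1.1 hy₁₂) hy₂Y.1.2)
      (hIIBA y₂ q hy₂Y.1.1 hy₂Y.1.2 le_rfl)
    show E q - E p = ∫ x in p..q, BA x
    rw [← hadd2, ← hadd1]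
    linarith [piece1, piece2, piece3]
  · push_neg at hY
    have := chain p q ⟨le_refl _, hpq⟩ ⟨hpq, le_refl _⟩ hpq
      (fun r hr => hY r ⟨hr.1, hr.2⟩)
    exact this

theorem discrete_chain_rule (n : ℕ) (T : ℝ) (hT : 0 < T)
    (w : Fin n → ℝ) (hw : ∀ i, 0 < w i)
    (c v : ℝ → Fin n → ℝ)
    (hc_nonneg : ∀ t ∈ Set.Icc (0 : ℝ) T, ∀ i, 0 ≤ c t i)
    (hv_int : ∀ i, IntegrableOn (fun t => v t i) (Set.Ioo 0 T))
    (hc_eq : ∀ t ∈ Set.Icc (0 : ℝ) T, ∀ i, c t i = c 0 i + ∫ r in (0 : ℝ)..t, v r i)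
    (hB_int : IntegrableOn (fun t => ∑ i, bfun (c t i / w i) (v t i)) (Set.Ioo 0 T)) :
    ∀ s t : ℝ, 0 ≤ s → s ≤ t → t ≤ T →
      (∑ i, w i * lamB (c t i / w i)) - (∑ i, w i * lamB (c s i / w i))
        = ∫ r in s..t, ∑ i, bfun (c r i / w i) (v r i) := by
  intro s t hs hst htT
  exact aux_chain n T hT w hw c v hc_nonneg hv_int hc_eq Finset.univ s t hs hst htT
    (hB_int.mono_set (Set.Ioo_subset_Ioo hs htT))
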